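/- Let G be a topological group, (I, ≤) a directed partially ordered set, and (X_i)_{i∈I} a family of nonempty compact Hausdorff spaces, each carrying a continuous action of G, together with continuous surjective G-equivariant bonding maps π_{ij} : X_j → X_i for i ≤ j satisfying π_{ii} = id and π_{ik} = π_{ij} ∘ π_{jk} for i ≤ j ≤ k. If each X_i carries an invariant regular Borel probability measure, then the inverse limit X = { x ∈ Π_{i∈I} X_i : π_{ij}(x_j) = x_i for all i ≤ j }, equipped with the subspace topology of the product and the diagonal G-action, carries an invariant regular Borel probability measure. -/

import Mathlib

open MeasureTheory
open scoped ENNReal NNReal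

/-- If every space in an inverse system of nonempty compact Hausdorff
`G`-spaces (over a directed partially ordered index set, with continuous surjective
equivariant bonding maps) carries an invariant regular Borel probability measure, then so
does the inverse limit, equipped with the subspace topology of the product and the diagonal
`G`-action. -/
theorem stmt_2 (G : Type) [Group G] [TopologicalSpace G] [IsTopologicalGroup G]
    (I : Type) [PartialOrder I]
    (hdir : ∀ i j : I, ∃ k, i ≤ k ∧ j ≤ k)
    (X : I → Type) [∀ i, TopologicalSpace (X i)] [∀ i, CompactSpace (X i)]
    [∀ i, T2Space (X i)] [∀ i, Nonempty (X i)]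
    [∀ i, MeasurableSpace (X i)] [∀ i, BorelSpace (X i)]
    (act : ∀ i, G → X i → X i)
    (hone : ∀ i x, act i 1 x = x)
    (hmul : ∀ i g h x, act i (g * h) x = act i g (act i h x))
    (hcont : ∀ i, Continuous fun p : G × X i => act i p.1 p.2)
    (p : ∀ i j, i ≤ j → X j → X i)
    (hpcont : ∀ i j h, Continuous (p i j h))
    (hpsurj : ∀ i j h, Function.Surjective (p i j h))
    (hpequiv : ∀ i j (h : i ≤ j) (g : G) (x : X j), p i j h (act j g x) = act i g (p i j h x))
    (hpid : ∀ i (x : X i), p i i le_rfl x = x)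
    (hpcomp : ∀ i j k (hij : i ≤ j) (hjk : j ≤ k) (x : X k),
      p i k (hij.trans hjk) x = p i j hij (p j k hjk x))
    (hinv : ∀ i, ∃ μ : Measure (X i), IsProbabilityMeasure μ ∧ μ.Regular ∧
      ∀ (g : G) (B : Set (X i)), MeasurableSet B → μ (act i g ⁻¹' B) = μ B) :
    letI L : Type := {x : ∀ i, X i // ∀ i j (h : i ≤ j), p i j h (x j) = x i}
    letI : MeasurableSpace L := borel L
    ∃ μ : Measure L, IsProbabilityMeasure μ ∧ μ.Regular ∧
      ∀ (g : G) (B : Set L), MeasurableSet B →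
        μ ((fun x : L => (⟨fun i => act i g (x.1 i), fun i j hij => by
              show p i j hij (act j g (x.1 j)) = act i g (x.1 i)
              rw [hpequiv i j hij g (x.1 j), x.2 i j hij]⟩ : L)) ⁻¹' B) = μ B := by
  classical
  letI L : Type := {x : ∀ i, X i // ∀ i j (h : i ≤ j), p i j h (x j) = x i}
  letI m : MeasurableSpace L := borel L
  haveI : BorelSpace L := ⟨rfl⟩
  -- L is a closed subset of the product, hence compact
  have hSclosed : IsClosed {x : ∀ i, X i | ∀ i j (h : i ≤ j), p i j h (x j) = x i} := by
    have hrw : {x : ∀ i, X i | ∀ i j (h : i ≤ j), p i j h (x j) = x i}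
        = ⋂ (i) (j) (h : i ≤ j), {x : ∀ i, X i | p i j h (x j) = x i} := by
      ext x; simp only [Set.mem_iInter, Set.mem_setOf_eq]
    rw [hrw]
    exact isClosed_iInter fun i => isClosed_iInter fun j => isClosed_iInter fun h =>
      isClosed_eq ((hpcont i j h).comp (continuous_apply j)) (continuous_apply i)
  haveI hLcs : CompactSpace L := isCompact_iff_compactSpace.mp hSclosed.isCompact
  -- the diagonal action on L
  have hmem : ∀ (g : G) (x : L) (i j : I) (h : i ≤ j),
      p i j h ((fun i => act i g (x.1 i)) j) = act i g (x.1 i) := by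
    intro g x i j h
    show p i j h (act j g (x.1 j)) = act i g (x.1 i)
    rw [hpequiv i j h g (x.1 j), x.2 i j h]
  let T : G → L → L := fun g x => ⟨fun i => act i g (x.1 i), hmem g x⟩
  have hTcont : ∀ g : G, Continuous (T g) := by
    intro g
    refine Continuous.subtype_mk ?_ _
    exact continuous_pi fun i => (hcont i).comp
      (continuous_const.prodMk ((continuous_apply i).comp continuous_subtype_val))
  have hTcomp : ∀ (g h : G) (x : L), T g (T h x) = T (g * h) x := by
    intro g h x
    apply Subtype.ext; funext i
    show act i g (act i h (x.1 i)) = act i (g * h) (x.1 i)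
    rw [hmul]
  have hTone : ∀ x : L, T 1 x = x := by
    intro x; apply Subtype.ext; funext i; exact hone i (x.1 i)
  rcases isEmpty_or_nonempty I with hI | hI
  · -- degenerate case: empty index set, L is a singleton
    haveI : Subsingleton L := ⟨fun a b => Subtype.ext (funext fun i => isEmptyElim i)⟩
    have x0 : L := ⟨fun i => isEmptyElim i, fun i => isEmptyElim i⟩
    have hopen : ∀ s : Set L, IsOpen s := by
      intro s
      rcases s.eq_empty_or_nonempty with rfl | ⟨a, ha⟩
      · exact isOpen_empty
      · have : s = Set.univ := Set.eq_univ_of_forall fun b => by rwa [Subsingleton.elim b a]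
        rw [this]; exact isOpen_univ
    haveI : Finite L := Finite.of_subsingleton
    have hcpt : ∀ s : Set L, IsCompact s := fun s => s.toFinite.isCompact
    have hpre : ∀ (f : L → L) (B : Set L), f ⁻¹' B = B := by
      intro f B; ext x; simp only [Set.mem_preimage]; rw [Subsingleton.elim (f x) x]
    refine ⟨Measure.dirac x0, inferInstance, ?_, ?_⟩
    · haveI : (Measure.dirac x0).OuterRegular :=
        ⟨fun A _ r hr => ⟨A, Set.Subset.rfl, hopen A, hr⟩⟩
      exact ⟨fun U _ r hr => ⟨U, Set.Subset.rfl, hcpt U, hr⟩⟩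
    · intro g B hB
      rw [hpre]
  · -- main case
    haveI : Nonempty I := hI
    haveI : IsDirected I (· ≤ ·) := ⟨hdir⟩
    let U : Ultrafilter I := Ultrafilter.of Filter.atTop
    have hU : ∀ i : I, Set.Ici i ∈ U :=
      fun i => Ultrafilter.of_le Filter.atTop (Filter.Ici_mem_atTop i)
    -- choose invariant measures
    choose μm hμm using hinv
    have hP : ∀ i, IsProbabilityMeasure (μm i) := fun i => (hμm i).1
    have hInv : ∀ i (g : G) (B : Set (X i)), MeasurableSet B → μm i (act i g ⁻¹' B) = μm i B :=
      fun i => (hμm i).2.2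
    -- ultrafilter limits in ℝ≥0∞
    have hlimex : ∀ f : I → ℝ≥0∞, ∃ a, Filter.Tendsto f (U : Filter I) (nhds a) := by
      intro f
      obtain ⟨a, -, ha⟩ := isCompact_univ.ultrafilter_le_nhds (U.map f)
        (by simp [Filter.le_principal_iff])
      exact ⟨a, ha⟩
    choose lim hT using hlimex
    have hlim_le : ∀ {f g : I → ℝ≥0∞}, (∀ᶠ k in (U : Filter I), f k ≤ g k) → lim f ≤ lim g :=
      fun h => le_of_tendsto_of_tendsto (hT _) (hT _) h
    have hlim_const : ∀ c : ℝ≥0∞, lim (fun _ => c) = c :=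
      fun c => tendsto_nhds_unique (hT _) tendsto_const_nhds
    have hlim_congr : ∀ {f g : I → ℝ≥0∞}, (∀ᶠ k in (U : Filter I), f k = g k) → lim f = lim g :=
      fun h => tendsto_nhds_unique ((hT _).congr' h) (hT _)
    have hlim_add : ∀ f g : I → ℝ≥0∞, lim (fun k => f k + g k) = lim f + lim g :=
      fun f g => tendsto_nhds_unique (hT _) ((hT f).add (hT g))
    -- projections
    let π : ∀ k : I, L → X k := fun k x => x.1 k
    have hπc : ∀ k, Continuous (π k) := fun k => (continuous_apply k).comp continuous_subtype_val
    have hmeas_im : ∀ (k : I) (K : Set L), IsCompact K → MeasurableSet (π k '' K) :=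
      fun k K hK => (hK.image (hπc k)).isClosed.measurableSet
    -- the candidate content
    let lam : TopologicalSpace.Compacts L → ℝ≥0∞ := fun K => lim fun k => μm k (π k '' K)
    have hlam_le_one : ∀ K, lam K ≤ 1 := by
      intro K
      have h1 : lim (fun _ : I => (1 : ℝ≥0∞)) = 1 := hlim_const 1
      refine le_trans (hlim_le (Filter.Eventually.of_forall fun k => ?_)) h1.le
      haveI := hP k
      exact prob_le_one
    have hlam_ne_top : ∀ K, lam K ≠ ⊤ :=
      fun K => ((hlam_le_one K).trans_lt ENNReal.one_lt_top).ne
    -- upper bounds in finite sets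
    have ub : ∀ s : Finset I, ∃ m : I, ∀ i ∈ s, i ≤ m := by
      intro s
      refine Finset.induction_on s ⟨Classical.arbitrary I, by simp⟩ ?_
      rintro a s - ⟨m0, hm0⟩
      obtain ⟨m', h1, h2⟩ := hdir a m0
      refine ⟨m', fun i hi => ?_⟩
      rcases Finset.mem_insert.mp hi with rfl | hi
      · exact h1
      · exact (hm0 i hi).trans h2
    -- surjectivity of the projections
    have hπsurj : ∀ (k : I) (x₀ : X k), ∃ y : L, y.1 k = x₀ := by
      intro k x₀
      let C : Finset I → Set (∀ i, X i) := fun s =>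
        {x | ∀ i ∈ s, ∀ j ∈ s, ∀ h : i ≤ j, p i j h (x j) = x i} ∩ {x | x k = x₀}
      have hCclosed : ∀ s, IsClosed (C s) := by
        intro s
        refine IsClosed.inter ?_ (isClosed_eq (continuous_apply k) continuous_const)
        have hrw : {x : ∀ i, X i | ∀ i ∈ s, ∀ j ∈ s, ∀ h : i ≤ j, p i j h (x j) = x i}
            = ⋂ (i) (_ : i ∈ s) (j) (_ : j ∈ s) (h : i ≤ j),
                {x : ∀ i, X i | p i j h (x j) = x i} := by
          ext x; simp only [Set.mem_iInter, Set.mem_setOf_eq]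
        rw [hrw]
        exact isClosed_iInter fun i => isClosed_iInter fun _ => isClosed_iInter fun j =>
          isClosed_iInter fun _ => isClosed_iInter fun h =>
            isClosed_eq ((hpcont i j h).comp (continuous_apply j)) (continuous_apply i)
      have hCne : ∀ s, (C s).Nonempty := by
        intro s
        obtain ⟨mm, hmm⟩ := ub (insert k s)
        have hkm : k ≤ mm := hmm k (Finset.mem_insert_self k s)
        obtain ⟨y, hy⟩ := hpsurj k mm hkm x₀
        refine ⟨fun i => if h : i ≤ mm then p i mm h y else Classical.arbitrary (X i), ?_, ?_⟩
        · intro i hi j hj hij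
          have him : i ≤ mm := hmm i (Finset.mem_insert_of_mem hi)
          have hjm : j ≤ mm := hmm j (Finset.mem_insert_of_mem hj)
          show p i j hij (if h : j ≤ mm then p j mm h y else Classical.arbitrary (X j))
              = if h : i ≤ mm then p i mm h y else Classical.arbitrary (X i)
          rw [dif_pos hjm, dif_pos him, ← hpcomp i j mm hij hjm y]
        · show (if h : k ≤ mm then p k mm h y else Classical.arbitrary (X k)) = x₀
          rw [dif_pos hkm, hy]
      have hCdir : Directed (· ⊇ ·) C := by
        intro s t
        refine ⟨s ∪ t, ?_, ?_⟩ <;> rintro x ⟨h1, h2⟩ <;> refine ⟨?_, h2⟩ <;>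
          intro i hi j hj hij
        · exact h1 i (Finset.mem_union_left t hi) j (Finset.mem_union_left t hj) hij
        · exact h1 i (Finset.mem_union_right s hi) j (Finset.mem_union_right s hj) hij
      obtain ⟨x, hx⟩ := IsCompact.nonempty_iInter_of_directed_nonempty_isCompact_isClosed
        C hCdir hCne (fun s => (hCclosed s).isCompact) hCclosed
      simp only [Set.mem_iInter] at hx
      refine ⟨⟨x, fun i j hij => ?_⟩, (hx ∅).2⟩
      exact (hx {i, j}).1 i (by simp) j (by simp) hij
    -- eventual disjointness of images of disjoint compacts
    have hdisj : ∀ K₁ K₂ : Set L, IsCompact K₁ → IsCompact K₂ → Disjoint K₁ K₂ →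
        ∃ i₀ : I, ∀ k, i₀ ≤ k → Disjoint (π k '' K₁) (π k '' K₂) := by
      intro K₁ K₂ h₁ h₂ hd
      by_contra hcon
      push_neg at hcon
      set D : I → Set (L × L) := fun i => (K₁ ×ˢ K₂) ∩ {q : L × L | q.1.1 i = q.2.1 i} with hD
      have hne : ∀ i : I, (D i).Nonempty := by
        intro i
        obtain ⟨k, hik, hnd⟩ := hcon i
        rw [Set.not_disjoint_iff] at hnd
        obtain ⟨c, hc1, hc2⟩ := hnd
        obtain ⟨a, ha, rfl⟩ := hc1
        obtain ⟨b, hb, hab⟩ := hc2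
        refine ⟨(a, b), ⟨ha, hb⟩, ?_⟩
        show a.1 i = b.1 i
        rw [← a.2 i k hik, ← b.2 i k hik]
        exact congrArg (p i k hik) hab.symm
      have hcl : ∀ i, IsClosed (D i) := by
        intro i
        refine IsClosed.inter (h₁.isClosed.prod h₂.isClosed) ?_
        exact isClosed_eq
          ((continuous_apply i).comp (continuous_subtype_val.comp continuous_fst))
          ((continuous_apply i).comp (continuous_subtype_val.comp continuous_snd))
      have hDdir : Directed (· ⊇ ·) D := by
        intro i j
        obtain ⟨k, hik, hjk⟩ := hdir i j
        constructor
        constructor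
        · rintro ⟨a, b⟩ ⟨hmem', heq⟩
          refine ⟨hmem', ?_⟩
          show a.1 i = b.1 i
          have heq' : a.1 k = b.1 k := heq
          rw [← a.2 i k hik, ← b.2 i k hik, heq']
        · rintro ⟨a, b⟩ ⟨hmem', heq⟩
          refine ⟨hmem', ?_⟩
          show a.1 j = b.1 j
          have heq' : a.1 k = b.1 k := heq
          rw [← a.2 j k hjk, ← b.2 j k hjk, heq']
      obtain ⟨⟨a, b⟩, hab⟩ := IsCompact.nonempty_iInter_of_directed_nonempty_isCompact_isClosed
        D hDdir hne (fun i => (hcl i).isCompact) hcl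
      simp only [Set.mem_iInter] at hab
      have haK : a ∈ K₁ := (hab (Classical.arbitrary I)).1.1
      have hbK : b ∈ K₂ := (hab (Classical.arbitrary I)).1.2
      have hab' : a = b := Subtype.ext (funext fun i => (hab i).2)
      exact Set.disjoint_left.mp hd haK (hab' ▸ hbK)
    -- content axioms
    have hlam_mono : ∀ K₁ K₂ : TopologicalSpace.Compacts L, (K₁ : Set L) ⊆ K₂ →
        lam K₁ ≤ lam K₂ := by
      intro K₁ K₂ h
      exact hlim_le (Filter.Eventually.of_forall fun k =>
        measure_mono (Set.image_mono h))
    have hlam_sup_le : ∀ K₁ K₂ : TopologicalSpace.Compacts L,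
        lam (K₁ ⊔ K₂) ≤ lam K₁ + lam K₂ := by
      intro K₁ K₂
      have hpt : ∀ k, μm k (π k '' (K₁ ⊔ K₂ : TopologicalSpace.Compacts L))
          ≤ μm k (π k '' K₁) + μm k (π k '' K₂) := by
        intro k
        rw [TopologicalSpace.Compacts.coe_sup, Set.image_union]
        exact measure_union_le _ _
      exact le_of_tendsto_of_tendsto (hT _) ((hT _).add (hT _))
        (Filter.Eventually.of_forall hpt)
    have hlam_disj : ∀ K₁ K₂ : TopologicalSpace.Compacts L, Disjoint (K₁ : Set L) K₂ →
        lam (K₁ ⊔ K₂) = lam K₁ + lam K₂ := by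
      intro K₁ K₂ hd
      obtain ⟨i₀, hi₀⟩ := hdisj K₁ K₂ K₁.2 K₂.2 hd
      have hev : ∀ᶠ k in (U : Filter I), μm k (π k '' (K₁ ⊔ K₂ : TopologicalSpace.Compacts L))
          = μm k (π k '' K₁) + μm k (π k '' K₂) := by
        filter_upwards [hU i₀] with k hk
        rw [TopologicalSpace.Compacts.coe_sup, Set.image_union]
        exact measure_union (hi₀ k hk) (hmeas_im k K₂ K₂.2)
      calc lam (K₁ ⊔ K₂) = lim (fun k => μm k (π k '' K₁) + μm k (π k '' K₂)) := hlim_congr hev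
      _ = lam K₁ + lam K₂ := hlim_add _ _
    let C : Content L :=
      { toFun := fun K => (lam K).toNNReal
        mono' := fun K₁ K₂ h => ENNReal.toNNReal_mono (hlam_ne_top K₂) (hlam_mono K₁ K₂ h)
        sup_disjoint' := by
          intro K₁ K₂ hd _ _
          show (lam (K₁ ⊔ K₂)).toNNReal = (lam K₁).toNNReal + (lam K₂).toNNReal
          rw [hlam_disj K₁ K₂ hd, ENNReal.toNNReal_add (hlam_ne_top K₁) (hlam_ne_top K₂)]
        sup_le' := by
          intro K₁ K₂
          show (lam (K₁ ⊔ K₂)).toNNReal ≤ (lam K₁).toNNReal + (lam K₂).toNNReal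
          have hne : lam K₁ + lam K₂ ≠ ⊤ :=
            ENNReal.add_ne_top.mpr ⟨hlam_ne_top K₁, hlam_ne_top K₂⟩
          have := ENNReal.toNNReal_mono hne (hlam_sup_le K₁ K₂)
          rwa [ENNReal.toNNReal_add (hlam_ne_top K₁) (hlam_ne_top K₂)] at this }
    have hC : ∀ K : TopologicalSpace.Compacts L, (C K : ℝ≥0∞) = lam K :=
      fun K => ENNReal.coe_toNNReal (hlam_ne_top K)
    -- total mass 1
    have hπ_univ : ∀ k : I, π k '' (Set.univ : Set L) = Set.univ := by
      intro k
      rw [Set.image_univ]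
      exact Set.range_eq_univ.mpr fun x₀ => hπsurj k x₀
    have hlam_univ : lam ⟨Set.univ, isCompact_univ⟩ = 1 := by
      have hfun : (fun k => μm k (π k '' (Set.univ : Set L))) = fun _ => (1 : ℝ≥0∞) := by
        funext k
        haveI := hP k
        rw [hπ_univ k, measure_univ]
      show lim (fun k => μm k (π k '' (Set.univ : Set L))) = 1
      rw [hfun, hlim_const]
    haveI hPM : IsProbabilityMeasure C.measure := by
      constructor
      rw [Content.measure_apply _ MeasurableSet.univ,
        C.outerMeasure_of_isOpen Set.univ isOpen_univ,
        C.innerContent_of_isCompact isCompact_univ isOpen_univ]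
      show (C ⟨Set.univ, isCompact_univ⟩ : ℝ≥0∞) = 1
      rw [hC, hlam_univ]
    -- invariance of the content under the action
    have hK : ∀ (g : G) (hg : Continuous (T g)) (K : TopologicalSpace.Compacts L),
        (C (K.map (T g) hg) : ℝ≥0∞) = C K := by
      intro g hg K
      rw [hC, hC]
      have him : ∀ k, π k '' (T g '' K) = act k g⁻¹ ⁻¹' (π k '' K) := by
        intro k
        have h1 : π k '' (T g '' K) = act k g '' (π k '' K) := by
          rw [Set.image_image, Set.image_image]
        rw [h1]
        have hli : Function.LeftInverse (act k g⁻¹) (act k g) := by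
          intro x
          rw [← hmul, inv_mul_cancel, hone]
        have hri : Function.RightInverse (act k g⁻¹) (act k g) := by
          intro x
          rw [← hmul, mul_inv_cancel, hone]
        rw [Set.image_eq_preimage_of_inverse hli hri]
      show lim (fun k => μm k (π k '' (K.map (T g) hg : TopologicalSpace.Compacts L)))
          = lim (fun k => μm k (π k '' K))
      have hfun : (fun k => μm k (π k '' (K.map (T g) hg : TopologicalSpace.Compacts L)))
          = fun k => μm k (π k '' K) := by
        funext k
        rw [TopologicalSpace.Compacts.coe_map, him k,
          hInv k g⁻¹ (π k '' K) (hmeas_im k K K.2)]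
      rw [hfun]
    refine ⟨C.measure, hPM, C.regular, ?_⟩
    intro g B hB
    let Tg : L ≃ₜ L :=
      { toFun := T g
        invFun := T g⁻¹
        left_inv := fun x => by rw [hTcomp, inv_mul_cancel, hTone]
        right_inv := fun x => by rw [hTcomp, mul_inv_cancel, hTone]
        continuous_toFun := hTcont g
        continuous_invFun := hTcont g⁻¹ }
    have hTB : MeasurableSet (T g ⁻¹' B) := (hTcont g).measurable hB
    show C.measure (T g ⁻¹' B) = C.measure B
    calc C.measure (T g ⁻¹' B) = C.outerMeasure (T g ⁻¹' B) := Content.measure_apply _ hTB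
    _ = C.outerMeasure B := C.outerMeasure_preimage Tg (fun K => hK g Tg.continuous K) B
    _ = C.measure B := (Content.measure_apply _ hB).symm
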